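/- (Ahlfors–Schwarz lemma for holomorphic maps into a domain with a negatively curved metric.) Let Ω ⊆ ℂ be open, let λ : Ω → ℝ be a positive, twice continuously differentiable function satisfying Δ(log λ)(w) ≥ 4·λ(w)² for all w ∈ Ω (i.e. the conformal metric λ|dw| on Ω has Gauss curvature at most −1), and let f : 𝔻 → Ω be holomorphic. Then for every z ∈ 𝔻, λ(f(z))·|f'(z)| ≤ 1/(1 − |z|²); in particular f is distance-decreasing from the Poincaré metric on 𝔻 to the metric λ|dw| on Ω. -/

import Mathlib

open Complex
open Filter Topology

/-- The standard Laplacian on `ℝ² ≅ ℂ`: `Δu = ∂²u/∂x² + ∂²u/∂y²`, written as the sum of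
second directional derivatives in the directions `1` and `i`. -/
noncomputable def laplacian (u : ℂ → ℝ) (z : ℂ) : ℝ :=
  fderiv ℝ (fun w : ℂ => fderiv ℝ u w 1) z 1 +
    fderiv ℝ (fun w : ℂ => fderiv ℝ u w Complex.I) z Complex.I

/- Multiplication by a complex number, as a real-linear continuous map. -/
noncomputable def cmul (c : ℂ) : ℂ →L[ℝ] ℂ := (ContinuousLinearMap.mul ℂ ℂ c).restrictScalars ℝ

@[simp] lemma cmul_apply (c e : ℂ) : cmul c e = c * e := rfl

lemma HasDerivAt.hasFDerivAt_cmul {f : ℂ → ℂ} {c : ℂ} {x : ℂ} (h : HasDerivAt f c x) :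
    HasFDerivAt f (cmul c) x := by
  have := (h.hasFDerivAt).restrictScalars ℝ
  have heq : cmul c = (ContinuousLinearMap.toSpanSingleton ℂ c).restrictScalars ℝ := by
    ext e; simp [cmul, mul_comm]
  rw [heq]; exact this

lemma sym_expand (q : ℂ →L[ℝ] ℂ →L[ℝ] ℝ) (hsym : ∀ x y, q x y = q y x) (a : ℂ) :
    q a a + q (a * I) (a * I) = Complex.normSq a * (q 1 1 + q I I) := by
  obtain ⟨x, y, hxy⟩ : ∃ x y : ℝ, a = x • (1 : ℂ) + y • I :=
    ⟨a.re, a.im, by simp [Complex.real_smul]⟩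
  subst hxy
  have h2 : (x • (1 : ℂ) + y • I) * I = (-y) • (1 : ℂ) + x • I := by
    simp [Complex.real_smul]
    ring_nf
    rw [Complex.I_sq]
    ring
  rw [h2]
  have e1 := hsym 1 I
  have hn : Complex.normSq (x • (1 : ℂ) + y • I) = x ^ 2 + y ^ 2 := by
    simp [Complex.real_smul, Complex.normSq_apply]
    ring
  rw [hn]
  simp only [map_add, map_smul, ContinuousLinearMap.add_apply, ContinuousLinearMap.smul_apply,
    smul_eq_mul]
  rw [e1]; ring

lemma snd_fderiv_eq {u : ℂ → ℝ} {p : ℂ → ℂ →L[ℝ] ℝ} {q : ℂ →L[ℝ] ℂ →L[ℝ] ℝ} {x : ℂ}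
    (h1 : ∀ᶠ y in nhds x, HasFDerivAt u (p y) y) (h2 : HasFDerivAt p q x) (e : ℂ) :
    fderiv ℝ (fun w : ℂ => fderiv ℝ u w e) x = (ContinuousLinearMap.apply ℝ ℝ e).comp q := by
  have heq : (fun w : ℂ => fderiv ℝ u w e) =ᶠ[nhds x] (fun w => p w e) :=
    h1.mono fun y hy => by simp only [hy.fderiv]
  rw [heq.fderiv_eq]
  exact (((ContinuousLinearMap.apply ℝ ℝ e).hasFDerivAt).comp x h2).fderiv

lemma laplacian_eq_data {u : ℂ → ℝ} {p : ℂ → ℂ →L[ℝ] ℝ} {q : ℂ →L[ℝ] ℂ →L[ℝ] ℝ} {x : ℂ}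
    (h1 : ∀ᶠ y in nhds x, HasFDerivAt u (p y) y) (h2 : HasFDerivAt p q x) :
    laplacian u x = q 1 1 + q I I := by
  rw [laplacian, snd_fderiv_eq h1 h2, snd_fderiv_eq h1 h2]
  rfl

lemma dir_test {v : ℂ → ℝ} {z : ℂ} {P : ℂ → ℂ →L[ℝ] ℝ} {Q : ℂ →L[ℝ] ℝ} (e : ℂ)
    (hP : ∀ᶠ w in 𝓝 z, HasFDerivAt v (P w) w)
    (hQ : HasFDerivAt (fun w => P w e) Q z)
    (hmax : IsLocalMax v z) : Q e ≤ 0 := by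
  set L : ℝ → ℂ := fun t => z + t • e with hL
  have hline : ∀ t : ℝ, HasDerivAt L e t := by
    intro t
    simpa [hL] using ((hasDerivAt_id t).smul_const e).const_add z
  have hcont : Continuous L := by continuity
  have htend : Tendsto L (𝓝 0) (𝓝 z) := by
    have : L 0 = z := by simp [hL]
    simpa [this] using hcont.tendsto 0
  set g : ℝ → ℝ := fun t => v (L t) with hg
  set φ : ℝ → ℝ := fun t => P (L t) e with hφ
  have E1 : ∀ᶠ t in 𝓝 0, HasDerivAt g (φ t) t := by
    filter_upwards [htend.eventually hP] with t ht
    exact ht.comp_hasDerivAt t (hline t)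
  have E2 : ∀ᶠ t in 𝓝 0, g t ≤ g 0 := by
    have h0 : g 0 = v z := by simp [hg, hL]
    rw [h0]
    exact htend.eventually hmax
  have hQL : HasFDerivAt (fun w => P w e) Q (L 0) := by
    have : L 0 = z := by simp [hL]
    rw [this]; exact hQ
  have hQ' : HasDerivAt φ (Q e) 0 := hQL.comp_hasDerivAt 0 (hline 0)
  have φ0 : φ 0 = 0 := by
    have hloc : IsLocalMax g 0 := by
      have h0 : g 0 = v z := by simp [hg, hL]
      unfold IsLocalMax IsMaxFilter
      rw [h0]
      exact htend.eventually hmax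
    exact hloc.hasDerivAt_eq_zero E1.self_of_nhds
  by_contra hcon
  push_neg at hcon
  have hslope : Tendsto (slope φ 0) (𝓝[≠] 0) (𝓝 (Q e)) :=
    hasDerivAt_iff_tendsto_slope.1 hQ'
  have E3' : ∀ᶠ t in 𝓝[≠] 0, 0 < slope φ 0 t := hslope.eventually (eventually_gt_nhds hcon)
  have E3 : ∀ᶠ t in 𝓝 0, t ≠ 0 → 0 < φ t / t := by
    have := eventually_nhdsWithin_iff.mp E3'
    filter_upwards [this] with t ht ht0
    have := ht (by simpa using ht0)
    rw [div_eq_inv_mul]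
    simpa [slope, φ0, ht0] using this
  obtain ⟨δ, hδ, hall⟩ := Metric.eventually_nhds_iff.1 ((E1.and E2).and E3)
  have hmem : ∀ t : ℝ, t ∈ Set.Icc (0:ℝ) (δ/2) → dist t 0 < δ := by
    intro t ht
    rw [Real.dist_eq, sub_zero, _root_.abs_of_nonneg ht.1]
    linarith [ht.2]
  have hsm : StrictMonoOn g (Set.Icc 0 (δ/2)) := by
    apply strictMonoOn_of_deriv_pos (convex_Icc 0 (δ/2))
    · intro t ht
      exact ((hall (hmem t ht)).1.1).differentiableAt.continuousAt.continuousWithinAt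
    · intro t ht
      rw [interior_Icc] at ht
      have h1 := hall (hmem t ⟨le_of_lt ht.1, le_of_lt ht.2⟩)
      rw [h1.1.1.deriv]
      have h2 := h1.2 (ne_of_gt ht.1)
      have h3 := ht.1
      by_contra hnp
      push_neg at hnp
      have : φ t / t ≤ 0 := div_nonpos_of_nonpos_of_nonneg hnp (le_of_lt h3)
      linarith
  have hlt : g 0 < g (δ/2) := by
    apply hsm (Set.left_mem_Icc.2 (by linarith)) (Set.right_mem_Icc.2 (by linarith))
    linarith
  have hle : g (δ/2) ≤ g 0 := (hall (hmem _ (Set.right_mem_Icc.2 (by linarith)))).1.2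
  linarith

lemma comp_data {g : ℂ → ℂ} {u : ℂ → ℝ} {z : ℂ} {p : ℂ → ℂ →L[ℝ] ℝ} {q : ℂ →L[ℝ] ℂ →L[ℝ] ℝ}
    (hg : ∀ᶠ w in 𝓝 z, DifferentiableAt ℂ g w) (hg2 : DifferentiableAt ℂ (deriv g) z)
    (h1 : ∀ᶠ y in 𝓝 (g z), HasFDerivAt u (p y) y) (h2 : HasFDerivAt p q (g z)) :
    ∃ (P : ℂ → ℂ →L[ℝ] ℝ) (Q₁ Q₂ : ℂ →L[ℝ] ℝ),
      (∀ᶠ w in 𝓝 z, HasFDerivAt (fun x => u (g x)) (P w) w) ∧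
      HasFDerivAt (fun w => P w 1) Q₁ z ∧ HasFDerivAt (fun w => P w I) Q₂ z ∧
      Q₁ 1 + Q₂ I = Complex.normSq (deriv g z) * (q 1 1 + q I I) := by
  set a := deriv g z with ha
  set b := deriv (deriv g) z with hb
  have hgz : DifferentiableAt ℂ g z := hg.self_of_nhds
  have hgc : ContinuousAt g z := hgz.continuousAt
  refine ⟨fun w => (p (g w)).comp (cmul (deriv g w)),
    (p (g z)).comp ((cmul b).smulRight 1) + (q.comp (cmul a)).flip (a * 1),
    (p (g z)).comp ((cmul b).smulRight I) + (q.comp (cmul a)).flip (a * I), ?_, ?_, ?_, ?_⟩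
  · filter_upwards [hg, hgc.eventually h1] with w hw hpw
    exact hpw.comp w (hw.hasDerivAt.hasFDerivAt_cmul)
  · exact ((h2.comp z hgz.hasDerivAt.hasFDerivAt_cmul).clm_apply
      (hg2.hasDerivAt.hasFDerivAt_cmul.mul_const' 1))
  · exact ((h2.comp z hgz.hasDerivAt.hasFDerivAt_cmul).clm_apply
      (hg2.hasDerivAt.hasFDerivAt_cmul.mul_const' I))
  · have hsym : ∀ x y, q x y = q y x := second_derivative_symmetric_of_eventually h1 h2
    have key := sym_expand q hsym a
    simp only [ContinuousLinearMap.add_apply, ContinuousLinearMap.comp_apply,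
      ContinuousLinearMap.flip_apply, ContinuousLinearMap.smulRight_apply, cmul_apply,
      smul_eq_mul, mul_one, one_mul]
    have hI : b * I * I = -b := by
      rw [mul_assoc, Complex.I_mul_I, mul_neg_one]
    rw [hI, map_neg]
    linarith [key]

noncomputable def nsqDeriv (w : ℂ) : ℂ →L[ℝ] ℝ :=
  (2*w.re) • Complex.reCLM + (2*w.im) • Complex.imCLM

@[simp] lemma nsqDeriv_apply (w e : ℂ) : nsqDeriv w e = 2*w.re*e.re + 2*w.im*e.im := by
  simp [nsqDeriv]

lemma hasFDerivAt_normSq (w : ℂ) : HasFDerivAt Complex.normSq (nsqDeriv w) w := by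
  have hre : HasFDerivAt (fun z : ℂ => z.re) Complex.reCLM w := Complex.reCLM.hasFDerivAt
  have him : HasFDerivAt (fun z : ℂ => z.im) Complex.imCLM w := Complex.imCLM.hasFDerivAt
  have h := (hre.mul hre).add (him.mul him)
  have hfun : (((fun z : ℂ => z.re) * fun z : ℂ => z.re) + (fun z : ℂ => z.im) * fun z : ℂ => z.im) = Complex.normSq := by
    funext z; simp [Complex.normSq_apply]
  rw [hfun] at h
  refine h.congr_fderiv ?_
  ext e
  simp [nsqDeriv]
  ring

lemma lapC {r : ℝ} {z : ℂ} (hN : 0 < r^2 - Complex.normSq z) :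
    ∃ (P : ℂ → ℂ →L[ℝ] ℝ) (Q₁ Q₂ : ℂ →L[ℝ] ℝ),
      (∀ᶠ w in 𝓝 z, HasFDerivAt (fun x => Real.log (r^2 - Complex.normSq x)) (P w) w) ∧
      HasFDerivAt (fun w => P w 1) Q₁ z ∧ HasFDerivAt (fun w => P w I) Q₂ z ∧
      Q₁ 1 + Q₂ I = -4 * r^2 / (r^2 - Complex.normSq z)^2 := by
  set N : ℂ → ℝ := fun w => r^2 - Complex.normSq w with hNdef
  have hNcont : Continuous N := continuous_const.sub Complex.continuous_normSq
  have hNev : ∀ᶠ w in 𝓝 z, 0 < N w := (hNcont.tendsto z).eventually (eventually_gt_nhds hN)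
  have hNz : N z ≠ 0 := ne_of_gt hN
  have hNder : ∀ w : ℂ, HasFDerivAt N (-(nsqDeriv w)) w := fun w =>
    (hasFDerivAt_normSq w).const_sub (r^2)
  have hd : HasFDerivAt (fun w => (N w)⁻¹) (-((N z ^ 2)⁻¹) • (-(nsqDeriv z))) z :=
    (hasDerivAt_inv hNz).comp_hasFDerivAt z (hNder z)
  have hre : HasFDerivAt (fun w : ℂ => w.re) Complex.reCLM z := Complex.reCLM.hasFDerivAt
  have him : HasFDerivAt (fun w : ℂ => w.im) Complex.imCLM z := Complex.imCLM.hasFDerivAt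
  have hc1 : HasFDerivAt (fun w : ℂ => -(2*w.re)) (-((2:ℝ) • Complex.reCLM)) z :=
    (hre.const_mul (2:ℝ)).neg
  have hc2 : HasFDerivAt (fun w : ℂ => -(2*w.im)) (-((2:ℝ) • Complex.imCLM)) z :=
    (him.const_mul (2:ℝ)).neg
  refine ⟨fun w => (N w)⁻¹ • (-(nsqDeriv w)),
    (-(2*z.re)) • (-((N z ^ 2)⁻¹) • (-(nsqDeriv z))) + (N z)⁻¹ • (-((2:ℝ) • Complex.reCLM)),
    (-(2*z.im)) • (-((N z ^ 2)⁻¹) • (-(nsqDeriv z))) + (N z)⁻¹ • (-((2:ℝ) • Complex.imCLM)),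
    ?_, ?_, ?_, ?_⟩
  · filter_upwards [hNev] with w hw
    exact (hNder w).log (ne_of_gt hw)
  · have heq : (fun w : ℂ => ((N w)⁻¹ • (-(nsqDeriv w))) 1) = fun w : ℂ => (-(2*w.re)) * (N w)⁻¹ := by
      funext w; simp; ring
    rw [heq]
    exact hc1.mul hd
  · have heq : (fun w : ℂ => ((N w)⁻¹ • (-(nsqDeriv w))) I) = fun w : ℂ => (-(2*w.im)) * (N w)⁻¹ := by
      funext w; simp; ring
    rw [heq]
    exact hc2.mul hd
  · simp only [ContinuousLinearMap.add_apply, ContinuousLinearMap.smul_apply,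
      ContinuousLinearMap.neg_apply, nsqDeriv_apply, Complex.reCLM_apply, Complex.imCLM_apply,
      Complex.one_re, Complex.one_im, Complex.I_re, Complex.I_im, smul_eq_mul]
    have hNz' : r^2 - (z.re*z.re+z.im*z.im) ≠ 0 := by
      simpa [hNdef, Complex.normSq_apply] using hNz
    simp only [hNdef, Complex.normSq_apply]
    field_simp
    ring

set_option maxHeartbeats 2000000 in
/-- **Ahlfors–Schwarz lemma** for holomorphic maps into a domain carrying a conformal
metric `λ|dw|` of Gauss curvature at most `-1` (i.e. `Δ log λ ≥ 4λ²`): any holomorphic map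
`f : 𝔻 → Ω` is distance-decreasing from the Poincaré metric to `λ|dw|`, i.e.
`λ(f z)·|f'(z)| ≤ 1/(1 - |z|²)`. -/
theorem ahlfors_schwarz (Ω : Set ℂ) (hΩ : IsOpen Ω) (lam : ℂ → ℝ)
    (hpos : ∀ w ∈ Ω, 0 < lam w)
    (hsmooth : ContDiffOn ℝ 2 lam Ω)
    (hcurv : ∀ w ∈ Ω, 4 * lam w ^ 2 ≤ laplacian (fun x : ℂ => Real.log (lam x)) w)
    (f : ℂ → ℂ) (hf : DifferentiableOn ℂ f (Metric.ball (0 : ℂ) 1))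
    (hmaps : Set.MapsTo f (Metric.ball (0 : ℂ) 1) Ω) :
    ∀ z ∈ Metric.ball (0 : ℂ) 1,
      lam (f z) * ‖deriv f z‖ ≤ 1 / (1 - ‖z‖ ^ 2) := by
  intro z₀ hz₀
  have hz₀' : ‖z₀‖ < 1 := by
    simpa [Complex.dist_eq] using Metric.mem_ball.1 hz₀
  have hfa : AnalyticOnNhd ℂ f (Metric.ball 0 1) := hf.analyticOnNhd Metric.isOpen_ball
  have hfd : AnalyticOnNhd ℂ (deriv f) (Metric.ball 0 1) := hfa.deriv
  set u₀ : ℝ := lam (f z₀) * ‖deriv f z₀‖ with hu₀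
  have key : ∀ r : ℝ, ‖z₀‖ < r → r < 1 →
      u₀ * (r^2 - Complex.normSq z₀) ≤ r := by
    intro r hr1 hr2
    have hr0 : 0 < r := lt_of_le_of_lt (norm_nonneg z₀) hr1
    set K := Metric.closedBall (0:ℂ) r with hK
    have hKsub : K ⊆ Metric.ball 0 1 := Metric.closedBall_subset_ball hr2
    set h : ℂ → ℝ := fun z => lam (f z) * ‖deriv f z‖ * (r^2 - Complex.normSq z)
      with hhdef
    have hcont : ContinuousOn h K := by
      apply ContinuousOn.mul
      apply ContinuousOn.mul
      · exact (hsmooth.continuousOn).comp (hf.continuousOn.mono hKsub)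
          (fun z hz => hmaps (hKsub hz))
      · exact continuous_norm.comp_continuousOn ((hfd.continuousOn).mono hKsub)
      · exact (continuous_const.sub Complex.continuous_normSq).continuousOn
    obtain ⟨z₁, hz₁K, hz₁max⟩ := (isCompact_closedBall (0:ℂ) r).exists_isMaxOn
      ⟨0, by simp [Metric.mem_closedBall, hr0.le]⟩ hcont
    have hz₀K : z₀ ∈ K := by
      simp only [hK, Metric.mem_closedBall, Complex.dist_eq, sub_zero]
      exact hr1.le
    suffices hgoal : h z₀ ≤ r by exact hgoal
    by_contra hcon
    push_neg at hcon
    have hmax1 : r < h z₁ := lt_of_lt_of_le hcon (hz₁max hz₀K)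
    -- z₁ is in the open ball
    have hz₁le : ‖z₁‖ ≤ r := by
      simpa [Complex.dist_eq] using Metric.mem_closedBall.1 hz₁K
    have hz₁lt : ‖z₁‖ < r := by
      rcases lt_or_eq_of_le hz₁le with hlt | heq
      · exact hlt
      · exfalso
        have : r^2 - Complex.normSq z₁ = 0 := by
          rw [← Complex.sq_norm, heq]; ring
        rw [hhdef] at hmax1
        simp only [this, mul_zero] at hmax1
        linarith
    have hN₁ : 0 < r^2 - Complex.normSq z₁ := by
      rw [← Complex.sq_norm]
      have := norm_nonneg z₁
      nlinarith
    have hz₁ball : z₁ ∈ Metric.ball (0:ℂ) 1 := hKsub hz₁K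
    have hfz₁Ω : f z₁ ∈ Ω := hmaps hz₁ball
    have hlam₁ : 0 < lam (f z₁) := hpos _ hfz₁Ω
    set u₁ : ℝ := lam (f z₁) * ‖deriv f z₁‖ with hu₁def
    have hu₁pos : 0 < u₁ := by
      by_contra hnp
      push_neg at hnp
      have : h z₁ ≤ 0 := mul_nonpos_of_nonpos_of_nonneg hnp hN₁.le
      linarith
    have ha : deriv f z₁ ≠ 0 := by
      intro h0
      rw [hu₁def, h0] at hu₁pos
      simp at hu₁pos
    -- data for the piece log ∘ lam ∘ f
    have hll : ContDiffAt ℝ 2 (fun x => Real.log (lam x)) (f z₁) :=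
      (Real.contDiffAt_log.2 (ne_of_gt hlam₁)).comp (f z₁)
        (hsmooth.contDiffAt (hΩ.mem_nhds hfz₁Ω))
    set p := fderiv ℝ (fun x => Real.log (lam x)) with hpdef
    have hp1 : ∀ᶠ y in 𝓝 (f z₁), HasFDerivAt (fun x => Real.log (lam x)) (p y) y := by
      filter_upwards [hll.eventually (by norm_num)] with y hy
      exact (hy.differentiableAt (by norm_num)).hasFDerivAt
    set q := fderiv ℝ p (f z₁) with hqdef
    have hp2 : HasFDerivAt p q (f z₁) := by
      have h1 : ContDiffAt ℝ 1 p (f z₁) := hll.fderiv_right (by norm_num)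
      exact (h1.differentiableAt (by norm_num)).hasFDerivAt
    have hlap : laplacian (fun x => Real.log (lam x)) (f z₁) = q 1 1 + q I I :=
      laplacian_eq_data hp1 hp2
    have hfev : ∀ᶠ w in 𝓝 z₁, DifferentiableAt ℂ f w := by
      filter_upwards [Metric.isOpen_ball.eventually_mem hz₁ball] with w hw
      exact hf.differentiableAt (Metric.isOpen_ball.mem_nhds hw)
    have hfd2 : DifferentiableAt ℂ (deriv f) z₁ := (hfd z₁ hz₁ball).differentiableAt
    obtain ⟨PA, QA1, QA2, hPA, hQA1, hQA2, hsumA⟩ := comp_data hfev hfd2 hp1 hp2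
    -- data for the piece log |f'|
    set a := deriv f z₁ with hadef
    set F : ℂ → ℂ := fun w => Complex.log (deriv f w / a) with hFdef
    have hFa : AnalyticAt ℂ F z₁ := by
      have h1 : AnalyticAt ℂ (fun w => deriv f w / a) z₁ :=
        (hfd z₁ hz₁ball).div analyticAt_const (by simpa using ha)
      have hm : deriv f z₁ / a ∈ Complex.slitPlane := by
        rw [← hadef, div_self ha]
        exact Complex.one_mem_slitPlane
      exact AnalyticAt.comp (g := Complex.log) (f := fun w => deriv f w / a) (x := z₁)
        (analyticAt_clog hm) h1
    obtain ⟨s, hsmem, hsan⟩ := hFa.eventually_analyticAt.exists_mem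
    obtain ⟨t, hts, htopen, htz⟩ := mem_nhds_iff.1 hsmem
    have hFan : AnalyticOnNhd ℂ F t := fun w hw => hsan w (hts hw)
    have hFev : ∀ᶠ w in 𝓝 z₁, DifferentiableAt ℂ F w := by
      filter_upwards [htopen.eventually_mem htz] with w hw
      exact (hFan w hw).differentiableAt
    have hFd2 : DifferentiableAt ℂ (deriv F) z₁ := (hFan.deriv z₁ htz).differentiableAt
    have hre1 : ∀ᶠ y in 𝓝 (F z₁), HasFDerivAt (fun x : ℂ => x.re) Complex.reCLM y :=
      Filter.Eventually.of_forall fun y => Complex.reCLM.hasFDerivAt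
    have hre2 : HasFDerivAt (fun _ : ℂ => Complex.reCLM) (0 : ℂ →L[ℝ] ℂ →L[ℝ] ℝ) (F z₁) :=
      hasFDerivAt_const _ _
    obtain ⟨PB, QB1, QB2, hPB, hQB1, hQB2, hsumB⟩ := comp_data hFev hFd2 hre1 hre2
    have hane : ∀ᶠ w in 𝓝 z₁, deriv f w ≠ 0 := hfd2.continuousAt.eventually_ne ha
    have hBeq : (fun w => (F w).re + Real.log (‖a‖)) =ᶠ[𝓝 z₁]
        (fun w => Real.log (‖deriv f w‖)) := by
      filter_upwards [hane] with w hw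
      rw [hFdef]
      simp only
      rw [Complex.log_re, norm_div, Real.log_div (by simpa using hw) (by simpa using ha)]
      ring
    -- data for the piece log (r² - |z|²)
    obtain ⟨PC, QC1, QC2, hPC, hQC1, hQC2, hsumC⟩ := lapC hN₁
    -- assemble
    set v : ℂ → ℝ := fun w => Real.log (lam (f w)) + Real.log (‖deriv f w‖) +
      Real.log (r^2 - Complex.normSq w) with hvdef
    set Pv : ℂ → ℂ →L[ℝ] ℝ := fun w => PA w + PB w + PC w with hPvdef
    have hPv : ∀ᶠ w in 𝓝 z₁, HasFDerivAt v (Pv w) w := by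
      filter_upwards [hPA, hPB, hPC, hBeq.eventually_nhds] with w h1 h2 h3 h4
      have h4' : (fun x => (F x).re + Real.log (‖a‖)) =ᶠ[𝓝 w]
          (fun x => Real.log (‖deriv f x‖)) := h4
      exact (h1.add (((h2.add_const (Real.log (‖a‖)))).congr_of_eventuallyEq
        h4'.symm)).add h3
    have hQv1 : HasFDerivAt (fun w => Pv w 1) (QA1 + QB1 + QC1) z₁ := by
      have heq : (fun w => Pv w 1) = fun w => PA w 1 + PB w 1 + PC w 1 := by
        funext w
        simp [hPvdef]
      rw [heq]
      exact (hQA1.add hQB1).add hQC1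
    have hQv2 : HasFDerivAt (fun w => Pv w I) (QA2 + QB2 + QC2) z₁ := by
      have heq : (fun w => Pv w I) = fun w => PA w I + PB w I + PC w I := by
        funext w
        simp [hPvdef]
      rw [heq]
      exact (hQA2.add hQB2).add hQC2
    -- local max
    have hmaxv : IsLocalMax v z₁ := by
      have hz₁ballr : z₁ ∈ Metric.ball (0:ℂ) r := by
        simp [Metric.mem_ball, Complex.dist_eq, hz₁lt]
      filter_upwards [hane, Metric.isOpen_ball.eventually_mem hz₁ballr] with w hw1 hw2
      have hwball : w ∈ Metric.ball (0:ℂ) 1 :=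
        Metric.ball_subset_ball hr2.le hw2
      have hNw : 0 < r^2 - Complex.normSq w := by
        have : ‖w‖ < r := by
          simpa [Complex.dist_eq] using Metric.mem_ball.1 hw2
        rw [← Complex.sq_norm]
        have := norm_nonneg w
        nlinarith
      have hlamw : 0 < lam (f w) := hpos _ (hmaps hwball)
      have habsw : 0 < ‖deriv f w‖ := by
        simpa [norm_pos_iff] using hw1
      have hhw : 0 < h w := by positivity
      have hle : h w ≤ h z₁ := hz₁max (Metric.ball_subset_closedBall hw2)
      have hvw : v w = Real.log (h w) := by
        rw [hvdef, hhdef]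
        simp only
        rw [Real.log_mul (by positivity) (by positivity),
          Real.log_mul (by positivity) (by positivity)]
      have hvz : v z₁ = Real.log (h z₁) := by
        rw [hvdef, hhdef]
        simp only
        have habs1 : 0 < ‖deriv f z₁‖ := by
          simpa [norm_pos_iff] using ha
        rw [Real.log_mul (by positivity) (by positivity),
          Real.log_mul (by positivity) (by positivity)]
      rw [hvw, hvz]
      exact Real.log_le_log hhw hle
    have t1 := dir_test 1 hPv hQv1 hmaxv
    have t2 := dir_test I hPv hQv2 hmaxv
    simp only [ContinuousLinearMap.add_apply] at t1 t2
    -- numeric contradiction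
    have hB0 : QB1 1 + QB2 I = 0 := by
      simpa using hsumB
    have hcurv' : 4 * lam (f z₁)^2 ≤ q 1 1 + q I I := by
      rw [← hlap]
      exact hcurv _ hfz₁Ω
    have hnsa : Complex.normSq a = ‖a‖ ^ 2 := (Complex.sq_norm a).symm
    have hns4 : Complex.normSq a * (4 * lam (f z₁)^2) ≤ Complex.normSq a * (q 1 1 + q I I) :=
      mul_le_mul_of_nonneg_left hcurv' (Complex.normSq_nonneg a)
    set N₁ := r^2 - Complex.normSq z₁ with hN₁def
    have hu₁r : r < u₁ * N₁ := hmax1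
    have hN₁sq : 0 < N₁^2 := by positivity
    have hACsum : Complex.normSq a * (q 1 1 + q I I) + (QC1 1 + QC2 I) ≤ 0 := by
      linarith [t1, t2, hsumA, hB0]
    have hQCmul : (QC1 1 + QC2 I) * N₁^2 = -4 * r^2 := by
      rw [hsumC]
      field_simp
    have hmul : (Complex.normSq a * (q 1 1 + q I I)) * N₁^2 ≤ 4 * r^2 := by
      nlinarith [hACsum, hN₁sq, hQCmul]
    have hu2 : 4 * u₁^2 ≤ Complex.normSq a * (q 1 1 + q I I) := by
      have he : 4 * u₁^2 = Complex.normSq a * (4 * lam (f z₁)^2) := by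
        rw [hu₁def, hnsa]; ring
      rw [he]; exact hns4
    have hrsq : r^2 < u₁^2 * N₁^2 := by nlinarith [hu₁r, hr0]
    have h4 : 4 * u₁^2 * N₁^2 ≤ 4 * r^2 := by
      have hh := mul_le_mul_of_nonneg_right hu2 hN₁sq.le
      linarith [hmul, hh]
    linarith [hrsq, h4]
  -- take the limit r → 1⁻
  have hlim : Tendsto (fun r : ℝ => u₀ * (r^2 - Complex.normSq z₀)) (𝓝[<] (1:ℝ))
      (𝓝 (u₀ * (1 - Complex.normSq z₀))) := by
    have hc : Continuous (fun r : ℝ => u₀ * (r^2 - Complex.normSq z₀)) := by continuity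
    have := hc.tendsto (1:ℝ)
    simp only [one_pow] at this
    exact this.mono_left nhdsWithin_le_nhds
  have hidt : Tendsto (fun r : ℝ => r) (𝓝[<] (1:ℝ)) (𝓝 1) :=
    tendsto_id.mono_left nhdsWithin_le_nhds
  have hev : ∀ᶠ r in 𝓝[<] (1:ℝ), u₀ * (r^2 - Complex.normSq z₀) ≤ r := by
    have h1 : ∀ᶠ r in 𝓝[<] (1:ℝ), ‖z₀‖ < r :=
      ((eventually_gt_nhds hz₀').filter_mono nhdsWithin_le_nhds)
    filter_upwards [h1, self_mem_nhdsWithin] with r hr1 hr2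
    exact key r hr1 hr2
  have hfin : u₀ * (1 - Complex.normSq z₀) ≤ 1 :=
    le_of_tendsto_of_tendsto hlim hidt hev
  have hpos1 : 0 < 1 - ‖z₀‖ ^ 2 := by
    have := norm_nonneg z₀
    nlinarith
  rw [le_div_iff₀ hpos1]
  rw [← Complex.sq_norm] at hfin
  exact hfin
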